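/- Let d ≥ 1, β > −1/2 and γ > −1. The map ψ(x,t) = (x, 𝔱(‖x‖,t)) is a bijection from Λ^{d+1}_{a,b,c} onto B^{d+1}₊, with inverse ψ⁻¹(y,v) = (y, sqrt((b−a)v² + a(1−‖y‖²) + c‖y‖²)). Moreover, for every measurable f on Λ^{d+1}_{a,b,c} such that f·W^{β,γ}_{a,b,c} is integrable, ∫_{Λ^{d+1}_{a,b,c}} f(x,t) W^{β,γ}_{a,b,c}(x,t) dx dt = (b−a) ∫_{B^{d+1}₊} f(ψ⁻¹(y,v)) |v|^{2β} (1−‖y‖²−v²)^{γ} dy dv. -/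

import Mathlib

open MeasureTheory

noncomputable section

/-- Euclidean space `ℝ^d`. -/
abbrev Euc (d : ℕ) := EuclideanSpace ℝ (Fin d)

/-- The domain `Λ^{d+1}_{a,b,c}`. -/
def LamD (d : ℕ) (a b c : ℝ) : Set (Euc d × ℝ) :=
  {p | 0 ≤ p.2 ∧ ‖p.1‖ ≤ 1 ∧ a + (c - a) * ‖p.1‖ ^ 2 ≤ p.2 ^ 2 ∧
       p.2 ^ 2 ≤ b + (c - b) * ‖p.1‖ ^ 2}

/-- The closed upper half-ball `B^{d+1}₊`. -/
def ballPlus (d : ℕ) : Set (Euc d × ℝ) := {p | ‖p.1‖ ^ 2 + p.2 ^ 2 ≤ 1 ∧ 0 ≤ p.2}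

/-- The function `𝔱(r,t) = sqrt((−a+(a−c)r²+t²)/(b−a))`. -/
def fraktD (a b c r t : ℝ) : ℝ :=
  Real.sqrt ((-a + (a - c) * r ^ 2 + t ^ 2) / (b - a))

/-- The map `ψ(x,t) = (x, 𝔱(‖x‖,t))`. -/
def psiD (d : ℕ) (a b c : ℝ) (p : Euc d × ℝ) : Euc d × ℝ :=
  (p.1, fraktD a b c ‖p.1‖ p.2)

/-- The inverse map `ψ⁻¹(y,v) = (y, sqrt((b−a)v² + a(1−‖y‖²) + c‖y‖²))`. -/
def psiDInv (d : ℕ) (a b c : ℝ) (p : Euc d × ℝ) : Euc d × ℝ :=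
  (p.1, Real.sqrt ((b - a) * p.2 ^ 2 + a * (1 - ‖p.1‖ ^ 2) + c * ‖p.1‖ ^ 2))

/-- The weight `W^{β,γ}_{a,b,c}` on `Λ^{d+1}_{a,b,c}`. -/
def WD (d : ℕ) (a b c β γ : ℝ) (p : Euc d × ℝ) : ℝ :=
  p.2 * ((-a + (a - c) * ‖p.1‖ ^ 2 + p.2 ^ 2) / (b - a)) ^ (β - 1 / 2) *
    ((b - (b - c) * ‖p.1‖ ^ 2 - p.2 ^ 2) / (b - a)) ^ γ

/-! ### Auxiliary material -/

instance instHaarProdEuc (d : ℕ) : Measure.IsAddHaarMeasure (volume : Measure (Euc d × ℝ)) := by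
  rw [Measure.volume_eq_prod]; infer_instance

lemma det_aux (d : ℕ) (B : Euc d →L[ℝ] ℝ) (α : ℝ)
    (L : (Euc d × ℝ) →L[ℝ] (Euc d × ℝ))
    (hL : ∀ u w, L (u, w) = (u, B u + α * w)) :
    L.det = α := by
  classical
  set b : Module.Basis (Fin d) ℝ (Euc d) := (EuclideanSpace.basisFun (Fin d) ℝ).toBasis
  set bP : Module.Basis (Fin d ⊕ Unit) ℝ (Euc d × ℝ) := b.prod (Module.Basis.singleton Unit ℝ)
  have hdet : L.det = LinearMap.det (L : (Euc d × ℝ) →ₗ[ℝ] (Euc d × ℝ)) := rfl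
  rw [hdet, ← LinearMap.det_toMatrix bP]
  have hM : LinearMap.toMatrix bP bP (L : (Euc d × ℝ) →ₗ[ℝ] (Euc d × ℝ)) =
      Matrix.fromBlocks 1 0 (Matrix.of fun _ j => B (b j)) (Matrix.of fun _ _ => α) := by
    ext i j
    rcases i with i | i <;> rcases j with j | j <;>
      simp [LinearMap.toMatrix_apply, bP, Module.Basis.prod_repr_inl, Module.Basis.prod_repr_inr,
        Module.Basis.prod_apply, hL, Matrix.fromBlocks, Matrix.one_apply, Finsupp.single_apply, eq_comm]
  rw [hM, Matrix.det_fromBlocks_zero₁₂]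
  simp [Matrix.det_unique]

/-- graphs (in the second variable) are null sets. -/
lemma graph_null (d : ℕ) (g : Euc d → ℝ) (hg : Measurable g) :
    volume {p : Euc d × ℝ | p.2 ^ 2 = g p.1} = 0 := by
  have hmeas : MeasurableSet {p : Euc d × ℝ | p.2 ^ 2 = g p.1} :=
    measurableSet_eq_fun ((measurable_snd).pow_const 2) (hg.comp measurable_fst)
  rw [Measure.volume_eq_prod, Measure.measure_prod_null hmeas]
  filter_upwards with x
  show volume (Prod.mk x ⁻¹' {p : Euc d × ℝ | p.2 ^ 2 = g p.1}) = 0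
  refine measure_mono_null (fun t ht => ?_) (Set.Finite.measure_zero
    ((Set.finite_singleton (-Real.sqrt (g x))).insert (Real.sqrt (g x))) _)
  have ht' : (t : ℝ) ^ 2 = g x := ht
  have habs : Real.sqrt (g x) = |t| := by rw [← ht', Real.sqrt_sq_eq_abs]
  rcases abs_cases t with ⟨h1, _⟩ | ⟨h1, _⟩
  · left; rw [habs, h1]
  · right; rw [Set.mem_singleton_iff, habs, h1, neg_neg]

section main
variable {d : ℕ} {a b c : ℝ}

/-- normal form of the quantity under the square root in `psiDInv`. -/
def eAux (d : ℕ) (a b c : ℝ) (p : Euc d × ℝ) : ℝ :=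
  (b - a) * p.2 ^ 2 + (c - a) * ‖p.1‖ ^ 2 + a

lemma psiDInv_eq : psiDInv d a b c = fun p => (p.1, Real.sqrt (eAux d a b c p)) := by
  funext p
  simp only [psiDInv, eAux]
  congr 1
  ring_nf

/-- the candidate derivative of `eAux`. -/
def DAux (d : ℕ) (a b c : ℝ) (p : Euc d × ℝ) : (Euc d × ℝ) →L[ℝ] ℝ :=
  ((b - a) • ((2 * p.2) • ContinuousLinearMap.snd ℝ (Euc d) ℝ)) +
    ((c - a) • ((2 : ℕ) • (innerSL ℝ p.1).comp (ContinuousLinearMap.fst ℝ (Euc d) ℝ)))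

lemma hasFDerivAt_eAux (p : Euc d × ℝ) :
    HasFDerivAt (eAux d a b c) (DAux d a b c p) p := by
  have h2 : HasFDerivAt (fun q : Euc d × ℝ => q.2 ^ 2)
      ((2 * p.2) • ContinuousLinearMap.snd ℝ (Euc d) ℝ) p := by
    have h := HasFDerivAt.mul (hasFDerivAt_snd (𝕜 := ℝ) (p := p)) (hasFDerivAt_snd (𝕜 := ℝ) (p := p))
    rw [show (fun q : Euc d × ℝ => q.2 ^ 2) = Prod.snd * Prod.snd from by
      funext q; simp [pow_two], two_mul, add_smul]
    exact h
  have h1 : HasFDerivAt (fun q : Euc d × ℝ => ‖q.1‖ ^ 2)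
      ((2 : ℕ) • (innerSL ℝ p.1).comp (ContinuousLinearMap.fst ℝ (Euc d) ℝ)) p :=
    (hasFDerivAt_fst (𝕜 := ℝ) (p := p)).norm_sq
  exact ((h2.const_mul (b - a)).add (h1.const_mul (c - a))).add_const a

/-- the candidate derivative of `psiDInv`. -/
def phiAux (d : ℕ) (a b c : ℝ) (p : Euc d × ℝ) : (Euc d × ℝ) →L[ℝ] (Euc d × ℝ) :=
  (ContinuousLinearMap.fst ℝ (Euc d) ℝ).prod
    ((1 / (2 * Real.sqrt (eAux d a b c p))) • DAux d a b c p)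

lemma hasFDerivAt_psiDInv {p : Euc d × ℝ} (hp : eAux d a b c p ≠ 0) :
    HasFDerivAt (psiDInv d a b c) (phiAux d a b c p) p := by
  rw [psiDInv_eq]
  exact HasFDerivAt.prodMk (hasFDerivAt_fst (𝕜 := ℝ) (p := p))
    ((Real.hasDerivAt_sqrt hp).comp_hasFDerivAt p (hasFDerivAt_eAux p))

lemma det_phiAux {p : Euc d × ℝ} (hp : 0 < eAux d a b c p) :
    (phiAux d a b c p).det = (b - a) * p.2 / Real.sqrt (eAux d a b c p) := by
  have hsq : Real.sqrt (eAux d a b c p) ≠ 0 := (Real.sqrt_pos.mpr hp).ne'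
  refine det_aux d (((c - a) / Real.sqrt (eAux d a b c p)) • innerSL ℝ p.1) _ _ ?_
  intro u w
  simp only [phiAux, DAux, ContinuousLinearMap.prod_apply, ContinuousLinearMap.coe_fst',
    ContinuousLinearMap.smul_apply, ContinuousLinearMap.add_apply,
    ContinuousLinearMap.coe_snd', ContinuousLinearMap.coe_comp', Function.comp_apply,
    smul_eq_mul, nsmul_eq_mul, Nat.cast_ofNat, Prod.mk.injEq, true_and]
  field_simp
  ring



/-- The open part of the half ball. -/
def sOpen (d : ℕ) : Set (Euc d × ℝ) := {p | ‖p.1‖ ^ 2 + p.2 ^ 2 < 1 ∧ 0 < p.2}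

/-- The open part of the domain. -/
def lamO (d : ℕ) (a b c : ℝ) : Set (Euc d × ℝ) :=
  {p | 0 < p.2 ∧ a + (c - a) * ‖p.1‖ ^ 2 < p.2 ^ 2 ∧ p.2 ^ 2 < b + (c - b) * ‖p.1‖ ^ 2}

lemma sOpen_measurable : MeasurableSet (sOpen d) := by
  have h1 : IsOpen (sOpen d) := by
    have hc : Continuous fun p : Euc d × ℝ => ‖p.1‖ ^ 2 + p.2 ^ 2 :=
      ((continuous_fst.norm.pow 2).add (continuous_snd.pow 2))
    exact (isOpen_lt hc continuous_const).inter (isOpen_lt continuous_const continuous_snd)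
  exact h1.measurableSet

lemma eAux_pos (hab : a < b) (ha : 0 ≤ a) (hc : 0 ≤ c) {p : Euc d × ℝ}
    (hp : p ∈ sOpen d) : 0 < eAux d a b c p := by
  obtain ⟨h1, h2⟩ := hp
  have hn : (0:ℝ) ≤ ‖p.1‖ ^ 2 := sq_nonneg _
  have hr : ‖p.1‖ ^ 2 < 1 := by nlinarith [sq_nonneg p.2]
  have : 0 < (b - a) * p.2 ^ 2 := mul_pos (sub_pos.mpr hab) (pow_pos h2 2)
  simp only [eAux]
  nlinarith

/-- `psiDInv` maps `sOpen` onto `lamO`. -/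
lemma image_sOpen (hab : a < b) (ha : 0 ≤ a) (hc : 0 ≤ c) :
    psiDInv d a b c '' sOpen d = lamO d a b c := by
  rw [psiDInv_eq]
  ext p
  constructor
  · rintro ⟨q, ⟨hq1, hq2⟩, rfl⟩
    have hr : ‖q.1‖ ^ 2 < 1 := by nlinarith [sq_nonneg q.2]
    have he : 0 < eAux d a b c q := eAux_pos hab ha hc ⟨hq1, hq2⟩
    have ht2 : (Real.sqrt (eAux d a b c q)) ^ 2 = eAux d a b c q := Real.sq_sqrt he.le
    simp only [lamO, Set.mem_setOf_eq]
    refine ⟨Real.sqrt_pos.mpr he, ?_, ?_⟩ <;>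
    · simp only [eAux] at ht2 ⊢
      rw [ht2]
      nlinarith [mul_pos (sub_pos.mpr hab) (pow_pos hq2 2),
        mul_pos (sub_pos.mpr hab) (show (0:ℝ) < 1 - ‖q.1‖ ^ 2 - q.2 ^ 2 by linarith)]
  · rintro ⟨h1, h2, h3⟩
    have hr : ‖p.1‖ ^ 2 < 1 := by nlinarith
    set v := Real.sqrt ((p.2 ^ 2 - a - (c - a) * ‖p.1‖ ^ 2) / (b - a)) with hv
    have hnum : 0 < p.2 ^ 2 - a - (c - a) * ‖p.1‖ ^ 2 := by nlinarith
    have hvpos : 0 < v := Real.sqrt_pos.mpr (div_pos hnum (sub_pos.mpr hab))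
    have hv2 : v ^ 2 = (p.2 ^ 2 - a - (c - a) * ‖p.1‖ ^ 2) / (b - a) :=
      Real.sq_sqrt (div_pos hnum (sub_pos.mpr hab)).le
    have hv2' : (b - a) * v ^ 2 = p.2 ^ 2 - a - (c - a) * ‖p.1‖ ^ 2 := by
      rw [hv2, mul_comm, div_mul_cancel₀ _ (sub_ne_zero.mpr hab.ne')]
    refine ⟨(p.1, v), ⟨?_, hvpos⟩, ?_⟩
    · have : v ^ 2 < 1 - ‖p.1‖ ^ 2 := by nlinarith
      linarith
    · have : eAux d a b c (p.1, v) = p.2 ^ 2 := by simp only [eAux]; nlinarith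
      simp only [this]
      exact Prod.ext rfl (Real.sqrt_sq h1.le)

lemma injOn_psiDInv (hab : a < b) (ha : 0 ≤ a) (hc : 0 ≤ c) :
    Set.InjOn (psiDInv d a b c) (sOpen d) := by
  rw [psiDInv_eq]
  rintro p hp q hq h
  simp only [Prod.mk.injEq] at h
  obtain ⟨h1, h2⟩ := h
  have hep := eAux_pos hab ha hc hp
  have heq := eAux_pos hab ha hc hq
  have he : eAux d a b c p = eAux d a b c q := by
    rw [← Real.sq_sqrt hep.le, ← Real.sq_sqrt heq.le, h2]
  have hsq : p.2 ^ 2 = q.2 ^ 2 := by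
    simp only [eAux, h1] at he
    have := sub_ne_zero.mpr hab.ne'
    have h3 : (b - a) * p.2 ^ 2 = (b - a) * q.2 ^ 2 := by linarith
    exact mul_left_cancel₀ this h3
  have h22 : p.2 = q.2 := by
    rw [← Real.sqrt_sq hp.2.le, ← Real.sqrt_sq hq.2.le, hsq]
  exact Prod.ext h1 h22

lemma lam_diff_null (hab : a < b) (ha : 0 ≤ a) (hc : 0 ≤ c) :
    volume (LamD d a b c \ lamO d a b c) = 0 := by
  have hsub : LamD d a b c \ lamO d a b c ⊆
      {p : Euc d × ℝ | p.2 ^ 2 = a + (c - a) * ‖p.1‖ ^ 2} ∪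
      {p : Euc d × ℝ | p.2 ^ 2 = b + (c - b) * ‖p.1‖ ^ 2} := by
    rintro p ⟨⟨h0, hr, hl, hu⟩, hnot⟩
    simp only [lamO, Set.mem_setOf_eq, not_and] at hnot
    by_cases ht : 0 < p.2
    · by_cases hl' : a + (c - a) * ‖p.1‖ ^ 2 < p.2 ^ 2
      · right
        exact le_antisymm hu (not_lt.mp (hnot ht hl'))
      · left
        exact le_antisymm (not_lt.mp hl') hl
    · have ht0 : p.2 = 0 := le_antisymm (not_lt.mp ht) h0
      left
      show p.2 ^ 2 = a + (c - a) * ‖p.1‖ ^ 2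
      have h02 : p.2 ^ 2 = 0 := by rw [ht0]; ring
      have hr2 : ‖p.1‖ ^ 2 ≤ 1 := by nlinarith [norm_nonneg p.1]
      have hge : 0 ≤ a + (c - a) * ‖p.1‖ ^ 2 := by
        nlinarith [mul_nonneg ha (sub_nonneg.mpr hr2), mul_nonneg hc (sq_nonneg ‖p.1‖)]
      linarith [hl.trans_eq h02]
  exact measure_mono_null hsub (measure_union_null
    (graph_null d (fun x => a + (c - a) * ‖x‖ ^ 2) (by fun_prop))
    (graph_null d (fun x => b + (c - b) * ‖x‖ ^ 2) (by fun_prop)))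


lemma lamO_subset (hab : a < b) : lamO d a b c ⊆ LamD d a b c := by
  rintro p ⟨h1, h2, h3⟩
  have hr2 : ‖p.1‖ ^ 2 < 1 := by nlinarith
  have hr : ‖p.1‖ ≤ 1 := by nlinarith [norm_nonneg p.1, sq_nonneg (‖p.1‖ - 1)]
  exact ⟨h1.le, hr, h2.le, h3.le⟩

lemma sOpen_subset : sOpen d ⊆ ballPlus d := fun p hp => ⟨hp.1.le, hp.2.le⟩

lemma ball_diff_null : volume (ballPlus d \ sOpen d) = 0 := by
  have hsub : ballPlus d \ sOpen d ⊆
      {p : Euc d × ℝ | p.2 ^ 2 = (fun _ : Euc d => (0:ℝ)) p.1} ∪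
      {p : Euc d × ℝ | p.2 ^ 2 = (fun x : Euc d => 1 - ‖x‖ ^ 2) p.1} := by
    rintro p ⟨⟨hle, h0⟩, hnot⟩
    simp only [sOpen, Set.mem_setOf_eq, not_and] at hnot
    by_cases hv : 0 < p.2
    · have h1 : ¬ ‖p.1‖ ^ 2 + p.2 ^ 2 < 1 := fun h => hnot h hv
      right
      show p.2 ^ 2 = 1 - ‖p.1‖ ^ 2
      have := le_antisymm hle (not_lt.mp h1)
      linarith
    · left
      show p.2 ^ 2 = 0
      have : p.2 = 0 := le_antisymm (not_lt.mp hv) h0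
      rw [this]; ring
  exact measure_mono_null hsub (measure_union_null
    (graph_null d (fun _ => (0:ℝ)) measurable_const)
    (graph_null d (fun x => 1 - ‖x‖ ^ 2) (by fun_prop)))

lemma mapsTo_psiD (hab : a < b) : Set.MapsTo (psiD d a b c) (LamD d a b c) (ballPlus d) := by
  rintro p ⟨h0, hr, hl, hu⟩
  have hnum : 0 ≤ -a + (a - c) * ‖p.1‖ ^ 2 + p.2 ^ 2 := by nlinarith
  have hv2 : (fraktD a b c ‖p.1‖ p.2) ^ 2 =
      (-a + (a - c) * ‖p.1‖ ^ 2 + p.2 ^ 2) / (b - a) :=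
    Real.sq_sqrt (div_nonneg hnum (by linarith))
  refine ⟨?_, Real.sqrt_nonneg _⟩
  show ‖p.1‖ ^ 2 + (fraktD a b c ‖p.1‖ p.2) ^ 2 ≤ 1
  have hdiv : (-a + (a - c) * ‖p.1‖ ^ 2 + p.2 ^ 2) / (b - a) ≤ 1 - ‖p.1‖ ^ 2 := by
    rw [div_le_iff₀ (by linarith)]
    nlinarith
  rw [hv2]
  linarith

lemma left_inv_psiD (hab : a < b) :
    ∀ p ∈ LamD d a b c, psiDInv d a b c (psiD d a b c p) = p := by
  rintro p ⟨h0, hr, hl, hu⟩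
  have hba : b - a ≠ 0 := sub_ne_zero.mpr hab.ne'
  have hnum : 0 ≤ -a + (a - c) * ‖p.1‖ ^ 2 + p.2 ^ 2 := by nlinarith
  have hv2 : (fraktD a b c ‖p.1‖ p.2) ^ 2 =
      (-a + (a - c) * ‖p.1‖ ^ 2 + p.2 ^ 2) / (b - a) :=
    Real.sq_sqrt (div_nonneg hnum (by linarith [hab]))
  simp only [psiD, psiDInv]
  refine Prod.ext rfl ?_
  show Real.sqrt ((b - a) * (fraktD a b c ‖p.1‖ p.2) ^ 2 + a * (1 - ‖p.1‖ ^ 2)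
      + c * ‖p.1‖ ^ 2) = p.2
  have harg : (b - a) * (fraktD a b c ‖p.1‖ p.2) ^ 2 + a * (1 - ‖p.1‖ ^ 2)
      + c * ‖p.1‖ ^ 2 = p.2 ^ 2 := by
    rw [hv2]; field_simp; ring
  rw [harg, Real.sqrt_sq h0]

lemma mapsTo_psiDInv (hab : a < b) (ha : 0 ≤ a) (hc : 0 ≤ c) :
    Set.MapsTo (psiDInv d a b c) (ballPlus d) (LamD d a b c) := by
  rintro p ⟨hle, h0⟩
  have hr2 : ‖p.1‖ ^ 2 ≤ 1 := by nlinarith [sq_nonneg p.2]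
  have harg : 0 ≤ (b - a) * p.2 ^ 2 + a * (1 - ‖p.1‖ ^ 2) + c * ‖p.1‖ ^ 2 := by
    nlinarith [sq_nonneg p.2, sq_nonneg ‖p.1‖]
  have hT2 : (Real.sqrt ((b - a) * p.2 ^ 2 + a * (1 - ‖p.1‖ ^ 2) + c * ‖p.1‖ ^ 2)) ^ 2 =
      (b - a) * p.2 ^ 2 + a * (1 - ‖p.1‖ ^ 2) + c * ‖p.1‖ ^ 2 := Real.sq_sqrt harg
  simp only [LamD, psiDInv, Set.mem_setOf_eq]
  refine ⟨Real.sqrt_nonneg _, ?_, ?_, ?_⟩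
  · exact by nlinarith [norm_nonneg p.1, sq_nonneg (‖p.1‖ - 1)]
  · show a + (c - a) * ‖p.1‖ ^ 2 ≤ (Real.sqrt _) ^ 2
    rw [hT2]; nlinarith [sq_nonneg p.2]
  · show (Real.sqrt _) ^ 2 ≤ b + (c - b) * ‖p.1‖ ^ 2
    rw [hT2]
    nlinarith [mul_nonneg (sub_pos.mpr hab).le
      (show (0:ℝ) ≤ 1 - ‖p.1‖ ^ 2 - p.2 ^ 2 by linarith)]

lemma right_inv_psiD (hab : a < b) (ha : 0 ≤ a) (hc : 0 ≤ c) :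
    ∀ p ∈ ballPlus d, psiD d a b c (psiDInv d a b c p) = p := by
  rintro p ⟨hle, h0⟩
  have hr2 : ‖p.1‖ ^ 2 ≤ 1 := by nlinarith [sq_nonneg p.2]
  have harg : 0 ≤ (b - a) * p.2 ^ 2 + a * (1 - ‖p.1‖ ^ 2) + c * ‖p.1‖ ^ 2 := by
    nlinarith [sq_nonneg p.2, sq_nonneg ‖p.1‖]
  have hT2 : (Real.sqrt ((b - a) * p.2 ^ 2 + a * (1 - ‖p.1‖ ^ 2) + c * ‖p.1‖ ^ 2)) ^ 2 =
      (b - a) * p.2 ^ 2 + a * (1 - ‖p.1‖ ^ 2) + c * ‖p.1‖ ^ 2 := Real.sq_sqrt harg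
  refine Prod.ext rfl ?_
  show fraktD a b c ‖p.1‖
      (Real.sqrt ((b - a) * p.2 ^ 2 + a * (1 - ‖p.1‖ ^ 2) + c * ‖p.1‖ ^ 2)) = p.2
  unfold fraktD
  have : (-a + (a - c) * ‖p.1‖ ^ 2 +
      (Real.sqrt ((b - a) * p.2 ^ 2 + a * (1 - ‖p.1‖ ^ 2) + c * ‖p.1‖ ^ 2)) ^ 2) / (b - a)
      = p.2 ^ 2 := by
    rw [hT2, div_eq_iff (sub_ne_zero.mpr hab.ne')]; ring
  rw [this, Real.sqrt_sq h0]

lemma pointwise_eq (hab : a < b) (ha : 0 ≤ a) (hc : 0 ≤ c) (β γ : ℝ)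
    (f : Euc d × ℝ → ℝ) {p : Euc d × ℝ} (hp : p ∈ sOpen d) :
    |(phiAux d a b c p).det| •
        ((fun q => f q * WD d a b c β γ q) (psiDInv d a b c p)) =
      (b - a) * (f (psiDInv d a b c p) *
        (|p.2| ^ (2 * β) * (1 - ‖p.1‖ ^ 2 - p.2 ^ 2) ^ γ)) := by
  obtain ⟨h1, h2⟩ := hp
  have hba : (0:ℝ) < b - a := sub_pos.mpr hab
  have he : 0 < eAux d a b c p := eAux_pos hab ha hc ⟨h1, h2⟩
  have hT : 0 < Real.sqrt (eAux d a b c p) := Real.sqrt_pos.mpr he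
  have hT2 : (Real.sqrt (eAux d a b c p)) ^ 2 = eAux d a b c p := Real.sq_sqrt he.le
  rw [det_phiAux he, psiDInv_eq]
  simp only [WD]
  have e1 : (-a + (a - c) * ‖p.1‖ ^ 2 + (Real.sqrt (eAux d a b c p)) ^ 2) / (b - a)
      = p.2 ^ 2 := by
    rw [hT2]; simp only [eAux]; rw [div_eq_iff hba.ne']; ring
  have e2 : (b - (b - c) * ‖p.1‖ ^ 2 - (Real.sqrt (eAux d a b c p)) ^ 2) / (b - a)
      = 1 - ‖p.1‖ ^ 2 - p.2 ^ 2 := by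
    rw [hT2]; simp only [eAux]; rw [div_eq_iff hba.ne']; ring
  show |(b - a) * p.2 / Real.sqrt (eAux d a b c p)| *
      (f (p.1, Real.sqrt (eAux d a b c p)) *
        (Real.sqrt (eAux d a b c p) *
          ((-a + (a - c) * ‖p.1‖ ^ 2 + (Real.sqrt (eAux d a b c p)) ^ 2) / (b - a))
            ^ (β - 1 / 2) *
          ((b - (b - c) * ‖p.1‖ ^ 2 - (Real.sqrt (eAux d a b c p)) ^ 2) / (b - a)) ^ γ)) = _
  rw [e1, e2, abs_of_pos (div_pos (mul_pos hba h2) hT), abs_of_pos h2]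
  have hpow : (p.2 ^ 2 : ℝ) ^ (β - 1 / 2) = p.2 ^ (2 * β - 1) := by
    rw [← Real.rpow_natCast p.2 2, ← Real.rpow_mul h2.le]
    congr 1
    push_cast
    ring
  have hpow2 : p.2 * p.2 ^ (2 * β - 1) = p.2 ^ (2 * β) := by
    calc p.2 * p.2 ^ (2 * β - 1) = p.2 ^ (1:ℝ) * p.2 ^ (2 * β - 1) := by
          rw [Real.rpow_one]
      _ = p.2 ^ (1 + (2 * β - 1)) := (Real.rpow_add h2 _ _).symm
      _ = p.2 ^ (2 * β) := by norm_num
  rw [hpow, ← hpow2]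
  field_simp

end main

/-- `ψ` is a bijection from `Λ^{d+1}_{a,b,c}` onto `B^{d+1}₊` with the
stated inverse, and the corresponding change-of-variables identity holds. -/
theorem psiD_bijOn_and_integral_identity
    (d : ℕ) (hd : 1 ≤ d) (a b c β γ : ℝ) (ha : 0 ≤ a) (hab : a < b) (hc : 0 ≤ c)
    (hβ : -(1 : ℝ) / 2 < β) (hγ : -1 < γ) :
    Set.BijOn (psiD d a b c) (LamD d a b c) (ballPlus d) ∧
    (∀ p ∈ LamD d a b c, psiDInv d a b c (psiD d a b c p) = p) ∧
    (∀ p ∈ ballPlus d, psiD d a b c (psiDInv d a b c p) = p) ∧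
    ∀ f : Euc d × ℝ → ℝ, Measurable f →
      IntegrableOn (fun p => f p * WD d a b c β γ p) (LamD d a b c) →
      ∫ p in LamD d a b c, f p * WD d a b c β γ p
        = (b - a) * ∫ p in ballPlus d,
            f (psiDInv d a b c p) *
              (|p.2| ^ (2 * β) * (1 - ‖p.1‖ ^ 2 - p.2 ^ 2) ^ γ) := by
  have hmapsψ := mapsTo_psiD (d := d) (a := a) (b := b) (c := c) hab
  have hleft := left_inv_psiD (d := d) (a := a) (b := b) (c := c) hab
  have hright := right_inv_psiD (d := d) hab ha hc
  have hmapsInv := mapsTo_psiDInv (d := d) hab ha hc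
  refine ⟨Set.InvOn.bijOn ⟨hleft, hright⟩ hmapsψ hmapsInv, hleft, hright, ?_⟩
  intro f hf _
  have hset1 : LamD d a b c =ᵐ[volume] lamO d a b c := by
    rw [ae_eq_set]
    exact ⟨lam_diff_null hab ha hc,
      by rw [Set.diff_eq_empty.mpr (lamO_subset hab)]; exact measure_empty⟩
  have hset2 : sOpen d =ᵐ[volume] ballPlus d := by
    rw [ae_eq_set]
    exact ⟨by rw [Set.diff_eq_empty.mpr sOpen_subset]; exact measure_empty,
      ball_diff_null⟩
  calc ∫ p in LamD d a b c, f p * WD d a b c β γ p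
      = ∫ p in lamO d a b c, f p * WD d a b c β γ p := setIntegral_congr_set hset1
    _ = ∫ p in psiDInv d a b c '' sOpen d, f p * WD d a b c β γ p := by
        rw [image_sOpen hab ha hc]
    _ = ∫ p in sOpen d, |(phiAux d a b c p).det| •
          ((fun q => f q * WD d a b c β γ q) (psiDInv d a b c p)) :=
        integral_image_eq_integral_abs_det_fderiv_smul volume sOpen_measurable
          (fun p hp => (hasFDerivAt_psiDInv (eAux_pos hab ha hc hp).ne').hasFDerivWithinAt)
          (injOn_psiDInv hab ha hc) _
    _ = ∫ p in sOpen d, (b - a) * (f (psiDInv d a b c p) *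
          (|p.2| ^ (2 * β) * (1 - ‖p.1‖ ^ 2 - p.2 ^ 2) ^ γ)) :=
        setIntegral_congr_fun sOpen_measurable (fun p hp => pointwise_eq hab ha hc β γ f hp)
    _ = ∫ p in ballPlus d, (b - a) * (f (psiDInv d a b c p) *
          (|p.2| ^ (2 * β) * (1 - ‖p.1‖ ^ 2 - p.2 ^ 2) ^ γ)) := setIntegral_congr_set hset2
    _ = (b - a) * ∫ p in ballPlus d, f (psiDInv d a b c p) *
          (|p.2| ^ (2 * β) * (1 - ‖p.1‖ ^ 2 - p.2 ^ 2) ^ γ) := integral_const_mul _ _
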